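/- Let (A, m) be a local ring, E a nonzero A/m-vector space, and R = A ⋉ E. Then R is a Gaussian ring if and only if A is a Gaussian ring. -/

import Mathlib

universe u v

/-- A chained (valuation) ring: the ideals are totally ordered by inclusion. -/
def IsChainedRing (R : Type*) [CommRing R] : Prop :=
  ∀ I J : Ideal R, I ≤ J ∨ J ≤ I

/-- `R` has zero divisors. -/
def HasZeroDivisors (R : Type*) [CommRing R] : Prop :=
  ∃ a b : R, a ≠ 0 ∧ b ≠ 0 ∧ a * b = 0

/-- An arithmetical ring: the localization at every maximal ideal is a chained ring. -/
def IsArithmetical (R : Type*) [CommRing R] : Prop :=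
  ∀ (P : Ideal R) (hP : P.IsMaximal),
    letI := hP.isPrime
    ∀ I J : Ideal (Localization.AtPrime P), I ≤ J ∨ J ≤ I

/-- `FlatDimLE R n M` : the flat (weak) dimension of `M` is at most `n`. -/
def FlatDimLE (R : Type u) [CommRing R] : ℕ → ModuleCat.{u} R → Prop
  | 0, M => Module.Flat R M
  | (n+1), M => ∃ (F : ModuleCat.{u} R) (f : F →ₗ[R] M), Function.Surjective f ∧
      Module.Flat R F ∧ FlatDimLE R n (ModuleCat.of R (LinearMap.ker f))

/-- The flat (weak) dimension of a module, valued in `ℕ∞` (`⊤` if no finite flat resolution). -/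
noncomputable def flatDim (R : Type u) [CommRing R] (M : ModuleCat.{u} R) : ℕ∞ :=
  sInf {n : ℕ∞ | ∃ k : ℕ, n = (k : ℕ∞) ∧ FlatDimLE R k M}

/-- The weak global dimension of `R` is at most `n`. -/
def WgdimLE (R : Type u) [CommRing R] (n : ℕ) : Prop :=
  ∀ M : ModuleCat.{u} R, FlatDimLE R n M

/-- The weak global dimension of `R` is infinite. -/
def HasInfiniteWeakGlobalDimension (R : Type u) [CommRing R] : Prop :=
  ∀ n : ℕ, ∃ M : ModuleCat.{u} R, ¬ FlatDimLE R n M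

/-- The content ideal of a polynomial: the ideal generated by its coefficients. -/
def contentIdeal {R : Type*} [CommRing R] (f : Polynomial R) : Ideal R :=
  Ideal.span (Set.range f.coeff)

/-- A Gaussian ring: `c(fg) = c(f)c(g)` for all polynomials. -/
def IsGaussian (R : Type*) [CommRing R] : Prop :=
  ∀ f g : Polynomial R, contentIdeal (f * g) = contentIdeal f * contentIdeal g

/-- A Prüfer ring: every finitely generated regular ideal is invertible. -/
def IsPruferRing (R : Type u) [CommRing R] : Prop :=
  ∀ I : Ideal R, I.FG → (∃ x ∈ I, x ∈ nonZeroDivisors R) →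
    IsUnit (I : FractionalIdeal (nonZeroDivisors R) (FractionRing R))

/-- A quasi-projective module: every map to a quotient of `M` lifts to an endomorphism. -/
def IsQuasiProjective (R : Type u) [CommRing R] (M : Type v) [AddCommGroup M] [Module R M] : Prop :=
  ∀ (N : Submodule R M) (g : M →ₗ[R] M ⧸ N), ∃ h : M →ₗ[R] M, N.mkQ.comp h = g

namespace ContentAux
variable {S : Type*} [CommRing S]

theorem coeff_mem_content (p : Polynomial S) (n : ℕ) : p.coeff n ∈ contentIdeal p :=
  Ideal.subset_span ⟨n, rfl⟩

theorem content_le {p : Polynomial S} {I : Ideal S} (h : ∀ n, p.coeff n ∈ I) :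
    contentIdeal p ≤ I := Ideal.span_le.2 (Set.range_subset_iff.2 h)

theorem content_map {T : Type*} [CommRing T] (φ : S →+* T) (p : Polynomial S) :
    contentIdeal (p.map φ) = (contentIdeal p).map φ := by
  unfold contentIdeal
  rw [Ideal.map_span]
  have h : (p.map φ).coeff = φ ∘ p.coeff := funext fun n => Polynomial.coeff_map φ n
  rw [h, Set.range_comp]

theorem mccoy (f : Polynomial S) (k : ℕ) (hu : IsUnit (f.coeff k)) :
    ∀ (n : ℕ) (g : Polynomial S), g.natDegree ≤ n → f * g = 0 → g = 0 := by
  intro n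
  induction n using Nat.strong_induction_on with
  | _ n IH =>
    intro g hdeg hfg
    -- inner descending induction
    have inner : ∀ (t : ℕ) (j : ℕ), f.natDegree + 1 ≤ j + t → f.coeff j • g = 0 := by
      intro t
      induction t with
      | zero =>
        intro j hj
        have : f.natDegree < j := by omega
        rw [Polynomial.coeff_eq_zero_of_natDegree_lt this, zero_smul]
      | succ t iht =>
        intro j hj
        by_cases hcase : f.natDegree + 1 ≤ j + t
        · exact iht j hcase
        set m := g.natDegree with hm
        have key : f.coeff j * g.coeff m = 0 := by
          have h0 : (f * g).coeff (j + m) = 0 := by rw [hfg, Polynomial.coeff_zero]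
          rw [Polynomial.coeff_mul] at h0
          rw [Finset.sum_eq_single ((j, m) : ℕ × ℕ)] at h0
          · exact h0
          · rintro ⟨p, q⟩ hmem hne
            rw [Finset.HasAntidiagonal.mem_antidiagonal] at hmem
            by_cases hq : m < q
            · rw [Polynomial.coeff_eq_zero_of_natDegree_lt hq, mul_zero]
            · have hp : j < p := by
                rcases Nat.lt_or_ge j p with h' | h'
                · exact h'
                · exfalso; apply hne
                  have : q ≤ m := not_lt.1 hq
                  have hpj : p = j := by omega
                  have hqm : q = m := by omega
                  simp [hpj, hqm]
              have hsm : f.coeff p • g = 0 := iht p (by omega)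
              have := congrArg (fun h => h.coeff q) hsm
              simpa [Polynomial.coeff_smul, smul_eq_mul] using this
          · intro habs
            exfalso; exact habs (by rw [Finset.HasAntidiagonal.mem_antidiagonal])
        by_cases hm0 : m = 0
        · have hg' : g = Polynomial.C (g.coeff 0) :=
            Polynomial.eq_C_of_natDegree_le_zero (by omega)
          rw [hg', Polynomial.smul_C, smul_eq_mul, ← hm0, key, map_zero]
        · set h' := f.coeff j • g with hh'
          have hdegh' : h'.natDegree ≤ m - 1 := by
            rw [Polynomial.natDegree_le_iff_coeff_eq_zero]
            intro q hq
            rw [hh', Polynomial.coeff_smul, smul_eq_mul]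
            rcases Nat.lt_or_ge m q with h' | h'
            · rw [Polynomial.coeff_eq_zero_of_natDegree_lt h', mul_zero]
            · have : q = m := by omega
              rw [this]; exact key
          have hfh' : f * h' = 0 := by
            rw [hh', Polynomial.smul_eq_C_mul, mul_left_comm, hfg, mul_zero]
          have hmn : m - 1 < n := by omega
          exact IH (m - 1) hmn h' hdegh' hfh'
    have hkg : f.coeff k • g = 0 := inner (f.natDegree + 1) k (by omega)
    obtain ⟨u, hu'⟩ := hu
    have : ((↑u⁻¹ * ↑u : S)) • g = 0 := by rw [mul_smul, hu', hkg, smul_zero]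
    rwa [Units.inv_mul, one_smul] at this

theorem content_mul_of_unit_coeff (f g : Polynomial S) (k : ℕ) (hu : IsUnit (f.coeff k)) :
    contentIdeal (f * g) = contentIdeal f * contentIdeal g := by
  have hcf : contentIdeal f = ⊤ := Ideal.eq_top_of_isUnit_mem _ (coeff_mem_content f k) hu
  rw [hcf, Ideal.top_mul]
  apply le_antisymm
  · apply content_le
    intro n
    rw [Polynomial.coeff_mul]
    exact Ideal.sum_mem _ fun x _ => Ideal.mul_mem_left _ _ (coeff_mem_content g x.2)
  · set I := contentIdeal (f * g)
    set φ := Ideal.Quotient.mk I with hφ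
    have h1 : f.map φ * g.map φ = 0 := by
      rw [← Polynomial.map_mul]
      ext n
      rw [Polynomial.coeff_map, Polynomial.coeff_zero,
        Ideal.Quotient.eq_zero_iff_mem]
      exact coeff_mem_content _ n
    have h2 : g.map φ = 0 :=
      mccoy (f.map φ) k (by rw [Polynomial.coeff_map]; exact hu.map φ)
        (g.map φ).natDegree (g.map φ) le_rfl h1
    apply content_le
    intro j
    rw [← Ideal.Quotient.eq_zero_iff_mem]
    have := congrArg (fun p => p.coeff j) h2
    simpa [Polynomial.coeff_map] using this

end ContentAux

open ContentAux in
/-- For `(A, m)` local and `E` a nonzero `A/m`-vector space, `A ⋉ E` is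
Gaussian iff `A` is Gaussian. -/
theorem stmt_16 (A : Type u) [CommRing A] [IsLocalRing A] (E : Type u)
    [AddCommGroup E] [Module A E] [Module Aᵐᵒᵖ E] [IsCentralScalar A E]
    [Nontrivial E]
    (hE : ∀ a ∈ IsLocalRing.maximalIdeal A, ∀ x : E, a • x = (0 : E)) :
    IsGaussian (TrivSqZeroExt A E) ↔ IsGaussian A := by
  set ι : A →+* TrivSqZeroExt A E := TrivSqZeroExt.inlHom A E with hι
  set π : TrivSqZeroExt A E →+* A := (TrivSqZeroExt.fstHom A A E).toRingHom with hπ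
  have hπι : ∀ a : A, π (ι a) = a := fun a => rfl
  have hπval : ∀ x : TrivSqZeroExt A E, π x = x.fst := fun x => rfl
  have hmap : ∀ p : Polynomial A, (p.map ι).map π = p := by
    intro p
    rw [Polynomial.map_map]
    have h : π.comp ι = RingHom.id A := RingHom.ext hπι
    rw [h, Polynomial.map_id]
  constructor
  · -- R Gaussian → A Gaussian
    intro hR f g
    calc contentIdeal (f * g)
        = contentIdeal (((f.map ι) * (g.map ι)).map π) := by
          rw [← Polynomial.map_mul, hmap]
      _ = (contentIdeal ((f.map ι) * (g.map ι))).map π := content_map π _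
      _ = (contentIdeal (f.map ι) * contentIdeal (g.map ι)).map π := by rw [hR]
      _ = (contentIdeal (f.map ι)).map π * (contentIdeal (g.map ι)).map π :=
          Ideal.map_mul π _ _
      _ = contentIdeal f * contentIdeal g := by
          rw [← content_map, ← content_map, hmap, hmap]
  · -- A Gaussian → R Gaussian
    intro hA f g
    by_cases hf : ∃ k, IsUnit (f.coeff k)
    · obtain ⟨k, hk⟩ := hf
      exact content_mul_of_unit_coeff f g k hk
    by_cases hg : ∃ k, IsUnit (g.coeff k)
    · obtain ⟨k, hk⟩ := hg
      rw [mul_comm f g, mul_comm (contentIdeal f)]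
      exact content_mul_of_unit_coeff g f k hk
    push_neg at hf hg
    -- all coefficients have fst in the maximal ideal
    have hfm : ∀ n, (f.coeff n).fst ∈ IsLocalRing.maximalIdeal A := fun n =>
      (IsLocalRing.mem_maximalIdeal _).2 fun h =>
        hf n (TrivSqZeroExt.isUnit_iff_isUnit_fst.2 h)
    have hgm : ∀ n, (g.coeff n).fst ∈ IsLocalRing.maximalIdeal A := fun n =>
      (IsLocalRing.mem_maximalIdeal _).2 fun h =>
        hg n (TrivSqZeroExt.isUnit_iff_isUnit_fst.2 h)
    set F := (f.map π).map ι with hF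
    set G := (g.map π).map ι with hG
    set δ := f - F with hδdef
    set γ := g - G with hγdef
    have hFc : ∀ n, F.coeff n = ι ((f.coeff n).fst) := by
      intro n; rw [hF, Polynomial.coeff_map, Polynomial.coeff_map, hπval]
    have hGc : ∀ n, G.coeff n = ι ((g.coeff n).fst) := by
      intro n; rw [hG, Polynomial.coeff_map, Polynomial.coeff_map, hπval]
    have hFfst : ∀ n, (F.coeff n).fst = (f.coeff n).fst := by
      intro n; rw [hFc n]; exact TrivSqZeroExt.fst_inl E _
    have hGfst : ∀ n, (G.coeff n).fst = (g.coeff n).fst := by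
      intro n; rw [hGc n]; exact TrivSqZeroExt.fst_inl E _
    have hδfst : ∀ n, (δ.coeff n).fst = 0 := by
      intro n
      rw [hδdef, Polynomial.coeff_sub, TrivSqZeroExt.fst_sub, hFfst, sub_self]
    have hγfst : ∀ n, (γ.coeff n).fst = 0 := by
      intro n
      rw [hγdef, Polynomial.coeff_sub, TrivSqZeroExt.fst_sub, hGfst, sub_self]
    -- elementwise zero products
    have hzero : ∀ x y : TrivSqZeroExt A E,
        x.fst ∈ IsLocalRing.maximalIdeal A → y.fst = 0 → x * y = 0 := by
      intro x y hx hy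
      refine TrivSqZeroExt.ext ?_ ?_
      · rw [TrivSqZeroExt.fst_mul, hy, mul_zero, TrivSqZeroExt.fst_zero]
      · rw [TrivSqZeroExt.snd_mul, TrivSqZeroExt.snd_zero, hE _ hx, hy,
          MulOpposite.op_zero, zero_smul, add_zero]
    have hzero' : ∀ x y : TrivSqZeroExt A E,
        x.fst = 0 → y.fst ∈ IsLocalRing.maximalIdeal A → x * y = 0 := by
      intro x y hx hy; rw [mul_comm]; exact hzero y x hy hx
    have polyzero : ∀ p q : Polynomial (TrivSqZeroExt A E),
        (∀ i j, p.coeff i * q.coeff j = 0) → p * q = 0 := by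
      intro p q h
      refine Polynomial.ext fun n => ?_
      rw [Polynomial.coeff_mul, Polynomial.coeff_zero]
      exact Finset.sum_eq_zero fun (x : ℕ × ℕ) _ => h x.1 x.2
    have hFγ : F * γ = 0 := polyzero _ _ fun i j =>
      hzero _ _ (by rw [hFfst]; exact hfm i) (hγfst j)
    have hδG : δ * G = 0 := polyzero _ _ fun i j =>
      hzero' _ _ (hδfst i) (by rw [hGfst]; exact hgm j)
    have hδγ : δ * γ = 0 := polyzero _ _ fun i j =>
      hzero' _ _ (hδfst i) (by rw [hγfst]; exact Submodule.zero_mem _)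
    have hfF : f = F + δ := by rw [hδdef]; ring
    have hgG : g = G + γ := by rw [hγdef]; ring
    have hfg_eq : f * g = F * G := by
      calc f * g = (F + δ) * (G + γ) := by rw [← hfF, ← hgG]
        _ = F * G + (F * γ + (δ * G + δ * γ)) := by ring
        _ = F * G := by rw [hFγ, hδG, hδγ]; ring
    have hij : ∀ i j, f.coeff i * g.coeff j = F.coeff i * G.coeff j := by
      intro i j
      have e1 : f.coeff i = F.coeff i + δ.coeff i := by
        rw [hδdef, Polynomial.coeff_sub]; ring
      have e2 : g.coeff j = G.coeff j + γ.coeff j := by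
        rw [hγdef, Polynomial.coeff_sub]; ring
      have z1 : F.coeff i * γ.coeff j = 0 :=
        hzero _ _ (by rw [hFfst]; exact hfm i) (hγfst j)
      have z2 : δ.coeff i * G.coeff j = 0 :=
        hzero' _ _ (hδfst i) (by rw [hGfst]; exact hgm j)
      have z3 : δ.coeff i * γ.coeff j = 0 :=
        hzero' _ _ (hδfst i) (by rw [hγfst]; exact Submodule.zero_mem _)
      calc f.coeff i * g.coeff j
          = F.coeff i * G.coeff j + (F.coeff i * γ.coeff j +
            (δ.coeff i * G.coeff j + δ.coeff i * γ.coeff j)) := by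
            rw [e1, e2]; ring
        _ = F.coeff i * G.coeff j := by rw [z1, z2, z3]; ring
    have hprod : contentIdeal f * contentIdeal g = contentIdeal F * contentIdeal G := by
      unfold contentIdeal
      rw [Ideal.span_mul_span, Ideal.span_mul_span]
      congr 1
      ext x
      simp only [Set.mem_mul, eq_comm (b := x)]
      constructor
      · rintro ⟨s, ⟨i, rfl⟩, t, ⟨j, rfl⟩, rfl⟩
        exact ⟨F.coeff i, ⟨i, rfl⟩, G.coeff j, ⟨j, rfl⟩, hij i j⟩
      · rintro ⟨s, ⟨i, rfl⟩, t, ⟨j, rfl⟩, rfl⟩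
        exact ⟨f.coeff i, ⟨i, rfl⟩, g.coeff j, ⟨j, rfl⟩, (hij i j).symm⟩
    have hFG : contentIdeal (F * G) = contentIdeal F * contentIdeal G := by
      calc contentIdeal (F * G)
          = contentIdeal (((f.map π) * (g.map π)).map ι) := by
            rw [Polynomial.map_mul, hF, hG]
        _ = (contentIdeal ((f.map π) * (g.map π))).map ι := content_map ι _
        _ = (contentIdeal (f.map π) * contentIdeal (g.map π)).map ι := by rw [hA]
        _ = (contentIdeal (f.map π)).map ι * (contentIdeal (g.map π)).map ι :=
            Ideal.map_mul ι _ _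
        _ = contentIdeal F * contentIdeal G := by rw [← content_map, ← content_map, hF, hG]
    rw [hfg_eq, hFG, hprod]
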